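/- For any set T of antipodal pairs of odd cardinality, the product of X operators over the qubits in those pairs, Xop (⋃_{p ∈ T} p), commutes with every stabilizer generator of the X–I code Ξ(2m) and swaps the codewords |0̄⟩ and |1̄⟩; hence it is a logical X operator of Ξ(2m). -/
import Mathlib


open scoped BigOperators

/-- Bit strings on `2m` qubits. -/
abbrev Bits (m : ℕ) := Fin (2*m) → ZMod 2

/-- The `2m`-qubit Hilbert space, as functions from computational basis labels to `ℂ`. -/
abbrev QState (m : ℕ) := Bits m → ℂ

/-- Indicator bit string of a finite set of qubits. -/
def indSet (m : ℕ) (S : Finset (Fin (2*m))) : Bits m := fun i => if i ∈ S then 1 else 0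

/-- The Pauli-X operator on the set `S`: sends `|x⟩` to `|x + 1_S⟩`. -/
def Xop (m : ℕ) (S : Finset (Fin (2*m))) : QState m →ₗ[ℂ] QState m where
  toFun v := fun x => v (x + indSet m S)
  map_add' _ _ := rfl
  map_smul' _ _ := rfl

/-- The Pauli-Z operator on the set `S`: sends `|x⟩` to `(-1)^{∑_{i∈S} x i} |x⟩`. -/
def Zop (m : ℕ) (S : Finset (Fin (2*m))) : QState m →ₗ[ℂ] QState m where
  toFun v := fun x => ((-1 : ℂ) ^ (∑ i ∈ S, (x i).val)) * v x
  map_add' u v := by funext x; simp [mul_add]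
  map_smul' c v := by funext x; simp; ring

/-- The antipodal involution `τ i = i + m (mod 2m)`. -/
def tau (m : ℕ) (i : Fin (2*m)) : Fin (2*m) :=
  ⟨(i.val + m) % (2*m), Nat.mod_lt _ (by have := i.isLt; omega)⟩

/-- The computational basis state `|x⟩`. -/
def ket (m : ℕ) (x : Bits m) : QState m := fun y => if y = x then 1 else 0

/-- The pair-equal bit string determined by `b : Fin m → ZMod 2`. -/
def xb (m : ℕ) (b : Fin m → ZMod 2) : Bits m :=
  fun i => b ⟨i.val % m, Nat.mod_lt _ (by have := i.isLt; omega)⟩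

/-- The logical codeword `|0̄⟩` of the X–I code `Ξ(2m)`. -/
noncomputable def ket0 (m : ℕ) : QState m :=
  ((Real.sqrt (2 ^ (m-1)) : ℂ))⁻¹ •
    ∑ b ∈ Finset.univ.filter (fun b : Fin m → ZMod 2 => ∑ i, b i = 0), ket m (xb m b)

/-- The logical codeword `|1̄⟩` of the X–I code `Ξ(2m)`. -/
noncomputable def ket1 (m : ℕ) : QState m :=
  ((Real.sqrt (2 ^ (m-1)) : ℂ))⁻¹ •
    ∑ b ∈ Finset.univ.filter (fun b : Fin m → ZMod 2 => ∑ i, b i = 1), ket m (xb m b)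

lemma tau_val (m : ℕ) (i : Fin (2*m)) :
    (tau m i).val = if i.val < m then i.val + m else i.val - m := by
  have hi := i.isLt
  simp only [tau]
  split
  · exact Nat.mod_eq_of_lt (by omega)
  · rw [Nat.mod_eq_sub_mod (by omega)]
    have h : i.val + m - 2*m = i.val - m := by omega
    rw [h, Nat.mod_eq_of_lt (by omega)]

lemma tau_tau (m : ℕ) (i : Fin (2*m)) : tau m (tau m i) = i := by
  apply Fin.ext
  have hi := i.isLt
  rw [tau_val, tau_val]
  split_ifs <;> omega

lemma tau_ne (m : ℕ) (i : Fin (2*m)) : tau m i ≠ i := by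
  intro h
  have h' := congrArg Fin.val h
  have hi := i.isLt
  rw [tau_val] at h'
  split_ifs at h' <;> omega

lemma npm (n : ℕ) : (-1:ℂ)^(n % 2) = (-1)^n := by
  conv_rhs => rw [← Nat.div_add_mod n 2]
  rw [pow_add, pow_mul]
  norm_num

lemma sign2 (a b c : ℕ) : (-1:ℂ)^((a+c)%2 + (b+c)%2) = (-1:ℂ)^(a+b) := by
  rw [pow_add, npm, npm, ← pow_add]
  have h : a + c + (b + c) = (a+b) + 2*c := by ring
  rw [h, pow_add, pow_mul]
  norm_num

lemma zmod2_add_self (a : ZMod 2) : a + a = 0 := by fin_cases a <;> rfl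

lemma Xop_apply (m : ℕ) (S : Finset (Fin (2*m))) (v : QState m) (x : Bits m) :
    Xop m S v x = v (x + indSet m S) := rfl

lemma Zop_apply (m : ℕ) (S : Finset (Fin (2*m))) (v : QState m) (x : Bits m) :
    Zop m S v x = ((-1 : ℂ) ^ (∑ i ∈ S, (x i).val)) * v x := rfl

lemma ket_apply (m : ℕ) (x y : Bits m) : ket m x y = if y = x then 1 else 0 := rfl

/-- For any set `T` of antipodal pairs of odd cardinality, the product of X operators
over the qubits in those pairs commutes with every stabilizer generator of the X–I
code `Ξ(2m)` and swaps the codewords `|0̄⟩` and `|1̄⟩`; hence it is a logical X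
operator of `Ξ(2m)`. -/
theorem XI_logical_X_odd_pairs (m : ℕ) (hm : 2 ≤ m)
    (T : Finset (Finset (Fin (2*m))))
    (hT : ∀ p ∈ T, ∃ i : Fin (2*m), p = {i, tau m i})
    (hodd : Odd T.card) :
    (∀ j : Fin (2*m),
        (Xop m (T.biUnion id)).comp (Zop m {j, tau m j}) =
          (Zop m {j, tau m j}).comp (Xop m (T.biUnion id))) ∧
    (∀ j k : Fin (2*m), ({j, tau m j} : Finset (Fin (2*m))) ≠ {k, tau m k} →
        (Xop m (T.biUnion id)).comp (Xop m {j, tau m j, k, tau m k}) =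
          (Xop m {j, tau m j, k, tau m k}).comp (Xop m (T.biUnion id))) ∧
    Xop m (T.biUnion id) (ket0 m) = ket1 m ∧
    Xop m (T.biUnion id) (ket1 m) = ket0 m := by
  set U : Finset (Fin (2*m)) := T.biUnion id with hU
  -- U is invariant under tau
  have hUtau : ∀ i : Fin (2*m), i ∈ U ↔ tau m i ∈ U := by
    suffices h : ∀ i : Fin (2*m), i ∈ U → tau m i ∈ U by
      intro i
      refine ⟨h i, fun hi => ?_⟩
      have := h _ hi
      rwa [tau_tau] at this
    intro i hi
    rw [hU, Finset.mem_biUnion] at hi ⊢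
    obtain ⟨p, hpT, hip⟩ := hi
    obtain ⟨j, rfl⟩ := hT p hpT
    refine ⟨_, hpT, ?_⟩
    simp only [id, Finset.mem_insert, Finset.mem_singleton] at hip ⊢
    rcases hip with rfl | rfl
    · exact Or.inr rfl
    · exact Or.inl (tau_tau m j)
  -- indicator of U is pair-equal
  have hind : ∀ i : Fin (2*m), indSet m U (tau m i) = indSet m U i := by
    intro i
    simp only [indSet]
    by_cases h : i ∈ U
    · rw [if_pos ((hUtau i).mp h), if_pos h]
    · rw [if_neg (fun hc => h ((hUtau i).mpr hc)), if_neg h]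
  have huu : ∀ z : Bits m, z + indSet m U + indSet m U = z := by
    intro z
    funext i
    show z i + indSet m U i + indSet m U i = z i
    rw [add_assoc, zmod2_add_self, add_zero]
  -- Part 1 : commutation with Z generators
  have part1 : ∀ j : Fin (2*m),
      (Xop m U).comp (Zop m {j, tau m j}) = (Zop m {j, tau m j}).comp (Xop m U) := by
    intro j
    apply LinearMap.ext
    intro v
    funext x
    rw [LinearMap.comp_apply, LinearMap.comp_apply, Xop_apply, Zop_apply, Zop_apply, Xop_apply]
    congr 1
    have hne : j ≠ tau m j := (tau_ne m j).symm
    rw [Finset.sum_pair hne, Finset.sum_pair hne]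
    simp only [Pi.add_apply]
    rw [hind, ZMod.val_add, ZMod.val_add]
    exact sign2 _ _ _
  -- Part 2 : commutation with X generators
  have part2 : ∀ j k : Fin (2*m), ({j, tau m j} : Finset (Fin (2*m))) ≠ {k, tau m k} →
      (Xop m U).comp (Xop m {j, tau m j, k, tau m k}) =
        (Xop m {j, tau m j, k, tau m k}).comp (Xop m U) := by
    intro j k _
    apply LinearMap.ext
    intro v
    funext x
    rw [LinearMap.comp_apply, LinearMap.comp_apply, Xop_apply, Xop_apply, Xop_apply, Xop_apply,
      add_right_comm]
  -- X on a ket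
  have hX_ket : ∀ x : Bits m, Xop m U (ket m x) = ket m (x + indSet m U) := by
    intro x
    funext y
    rw [Xop_apply, ket_apply, ket_apply]
    have hiff : y + indSet m U = x ↔ y = x + indSet m U := by
      constructor
      · intro h; rw [← h, huu]
      · intro h; rw [h, huu]
    rw [if_congr hiff rfl rfl]
  -- the bit vector c
  set c : Fin m → ZMod 2 :=
    fun k => if (⟨k.val, by have := k.isLt; omega⟩ : Fin (2*m)) ∈ U then 1 else 0 with hc
  have hconv : indSet m U = xb m c := by
    funext i
    have hi := i.isLt
    show (if i ∈ U then (1:ZMod 2) else 0) =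
      c ⟨i.val % m, Nat.mod_lt _ (by omega)⟩
    rw [hc]
    simp only []
    by_cases h : i.val < m
    · have he : (⟨(⟨i.val % m, Nat.mod_lt _ (by omega)⟩ : Fin m).val, by omega⟩ : Fin (2*m)) = i :=
        Fin.ext (by simp [Nat.mod_eq_of_lt h])
      rw [he]
    · have h1 : i.val % m = i.val - m := by
        rw [Nat.mod_eq_sub_mod (by omega), Nat.mod_eq_of_lt (by omega)]
      have htau : tau m (⟨(⟨i.val % m, Nat.mod_lt _ (by omega)⟩ : Fin m).val, by omega⟩ : Fin (2*m)) = i := by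
        apply Fin.ext
        rw [tau_val]
        show (if i.val % m < m then i.val % m + m else i.val % m - m) = i.val
        rw [h1]
        split_ifs <;> omega
      have hiff : i ∈ U ↔ (⟨(⟨i.val % m, Nat.mod_lt _ (by omega)⟩ : Fin m).val, by omega⟩ : Fin (2*m)) ∈ U := by
        rw [hUtau (⟨(⟨i.val % m, Nat.mod_lt _ (by omega)⟩ : Fin m).val, by omega⟩ : Fin (2*m)), htau]
      rw [if_congr hiff rfl rfl]
  -- sum of c is 1
  have hsumc : ∑ k, c k = (1 : ZMod 2) := by
    have h1 : ∑ k, c k =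
        ((Finset.univ.filter (fun k : Fin m =>
          (⟨k.val, by have := k.isLt; omega⟩ : Fin (2*m)) ∈ U)).card : ZMod 2) := by
      rw [hc, Finset.sum_boole]
    have h2 : (Finset.univ.filter (fun k : Fin m =>
        (⟨k.val, by have := k.isLt; omega⟩ : Fin (2*m)) ∈ U)).card = T.card := by
      apply Finset.card_bij
        (fun k _ => ({(⟨k.val, by have := k.isLt; omega⟩ : Fin (2*m)),
          tau m ⟨k.val, by have := k.isLt; omega⟩} : Finset (Fin (2*m))))
      · intro k hk
        rw [Finset.mem_filter] at hk
        obtain ⟨-, hkU⟩ := hk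
        rw [hU, Finset.mem_biUnion] at hkU
        obtain ⟨p, hpT, hkp⟩ := hkU
        obtain ⟨j, rfl⟩ := hT p hpT
        simp only [id, Finset.mem_insert, Finset.mem_singleton] at hkp
        rcases hkp with h | h
        · rw [h]; exact hpT
        · rw [h, tau_tau, Finset.pair_comm]; exact hpT
      · intro k₁ hk₁ k₂ hk₂ h
        have hmem : (⟨k₁.val, by have := k₁.isLt; omega⟩ : Fin (2*m)) ∈
            ({(⟨k₂.val, by have := k₂.isLt; omega⟩ : Fin (2*m)),
              tau m ⟨k₂.val, by have := k₂.isLt; omega⟩} : Finset (Fin (2*m))) := by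
          rw [← h]
          exact Finset.mem_insert_self _ _
        rw [Finset.mem_insert, Finset.mem_singleton] at hmem
        rcases hmem with h' | h'
        · injection h' with hv
          exact Fin.ext hv
        · exfalso
          have := congrArg Fin.val h'
          rw [tau_val] at this
          have hk1 := k₁.isLt
          have hk2 := k₂.isLt
          simp only [] at this
          split_ifs at this <;> omega
      · intro p hpT
        obtain ⟨j, rfl⟩ := hT p hpT
        have hjU : j ∈ U := by
          rw [hU, Finset.mem_biUnion]
          exact ⟨_, hpT, Finset.mem_insert_self _ _⟩
        by_cases h : j.val < m
        · refine ⟨⟨j.val, h⟩, ?_, ?_⟩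
          · rw [Finset.mem_filter]
            refine ⟨Finset.mem_univ _, ?_⟩
            have : (⟨(⟨j.val, h⟩ : Fin m).val, by omega⟩ : Fin (2*m)) = j := Fin.ext rfl
            rw [this]; exact hjU
          · have : (⟨(⟨j.val, h⟩ : Fin m).val, by omega⟩ : Fin (2*m)) = j := Fin.ext rfl
            rw [this]
        · have hτ : (tau m j).val < m := by
            rw [tau_val]; have := j.isLt; split_ifs <;> omega
          refine ⟨⟨(tau m j).val, hτ⟩, ?_, ?_⟩
          · rw [Finset.mem_filter]
            refine ⟨Finset.mem_univ _, ?_⟩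
            have : (⟨(⟨(tau m j).val, hτ⟩ : Fin m).val, by omega⟩ : Fin (2*m)) = tau m j :=
              Fin.ext rfl
            rw [this]
            exact (hUtau j).mp hjU
          · have : (⟨(⟨(tau m j).val, hτ⟩ : Fin m).val, by omega⟩ : Fin (2*m)) = tau m j :=
              Fin.ext rfl
            rw [this, tau_tau, Finset.pair_comm]
    rw [h1, h2]
    obtain ⟨n, hn⟩ := hodd
    rw [hn]
    push_cast
    have : ((2:ℕ) : ZMod 2) = 0 := by decide
    push_cast at this
    rw [this]
    ring
  -- swapping the sums
  have hswap : ∀ A B : ZMod 2, A + 1 = B →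
      Xop m U (∑ b ∈ Finset.univ.filter (fun b : Fin m → ZMod 2 => ∑ i, b i = A), ket m (xb m b))
        = ∑ b ∈ Finset.univ.filter (fun b : Fin m → ZMod 2 => ∑ i, b i = B), ket m (xb m b) := by
    intro A B hAB
    rw [map_sum]
    have hterm : ∀ b : Fin m → ZMod 2, Xop m U (ket m (xb m b)) = ket m (xb m (b + c)) := by
      intro b
      rw [hX_ket, hconv]
      rfl
    rw [Finset.sum_congr rfl (fun b _ => hterm b)]
    refine Finset.sum_nbij' (fun b => b + c) (fun b => b + c) ?_ ?_ ?_ ?_ ?_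
    · intro b hb
      rw [Finset.mem_filter] at hb ⊢
      refine ⟨Finset.mem_univ _, ?_⟩
      show ∑ i, (b i + c i) = B
      rw [Finset.sum_add_distrib, hb.2, hsumc, hAB]
    · intro b hb
      rw [Finset.mem_filter] at hb ⊢
      refine ⟨Finset.mem_univ _, ?_⟩
      show ∑ i, (b i + c i) = A
      rw [Finset.sum_add_distrib, hb.2, hsumc]
      have : B + 1 = A := by rw [← hAB]; rw [add_assoc, zmod2_add_self, add_zero]
      exact this
    · intro b _
      funext i
      show b i + c i + c i = b i
      rw [add_assoc, zmod2_add_self, add_zero]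
    · intro b _
      funext i
      show b i + c i + c i = b i
      rw [add_assoc, zmod2_add_self, add_zero]
    · intro b _
      rfl
  refine ⟨part1, part2, ?_, ?_⟩
  · rw [ket0, map_smul, hswap 0 1 (by decide), ket1]
  · rw [ket1, map_smul, hswap 1 0 (by decide), ket0]
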